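/- For z = E + iη in the domain D = {|E| ≤ 5, 0 < η ≤ 10}, there exist constants c, C > 0 such that c·√(κ+η) ≤ |1 - m_sc(z)²| ≤ C·√(κ+η), where κ = min(|E-2|, |E+2|) is the distance of E to the spectral edges ±2. -/

import Mathlib

open Complex

lemma aux_prod_bounds (a b η : ℝ) (hη : 0 < η) (hη10 : η ≤ 10) (hb7 : |b| ≤ 7)
    (hb2 : 2 ≤ |b|) :
    |a| + η ≤ Real.sqrt (a ^ 2 + η ^ 2) * Real.sqrt (b ^ 2 + η ^ 2) ∧
    Real.sqrt (a ^ 2 + η ^ 2) * Real.sqrt (b ^ 2 + η ^ 2) ≤ 17 * (|a| + η) := by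
  have ha0 : (0:ℝ) ≤ |a| + η := by positivity
  have hb0 : (0:ℝ) ≤ |b| + η := by positivity
  have h1 : Real.sqrt (a ^ 2 + η ^ 2) ≤ |a| + η := by
    calc Real.sqrt (a ^ 2 + η ^ 2) ≤ Real.sqrt ((|a| + η) ^ 2) := by
          apply Real.sqrt_le_sqrt; nlinarith [abs_nonneg a, _root_.sq_abs a]
      _ = |a| + η := by rw [Real.sqrt_sq ha0]
  have h2 : |a| ≤ Real.sqrt (a ^ 2 + η ^ 2) := by
    calc |a| = Real.sqrt (a ^ 2) := (Real.sqrt_sq_eq_abs a).symm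
      _ ≤ Real.sqrt (a ^ 2 + η ^ 2) := by apply Real.sqrt_le_sqrt; nlinarith
  have h3 : η ≤ Real.sqrt (a ^ 2 + η ^ 2) := by
    calc η = Real.sqrt (η ^ 2) := by rw [Real.sqrt_sq hη.le]
      _ ≤ Real.sqrt (a ^ 2 + η ^ 2) := by apply Real.sqrt_le_sqrt; nlinarith [sq_nonneg a]
  have h4 : |b| ≤ Real.sqrt (b ^ 2 + η ^ 2) := by
    calc |b| = Real.sqrt (b ^ 2) := (Real.sqrt_sq_eq_abs b).symm
      _ ≤ Real.sqrt (b ^ 2 + η ^ 2) := by apply Real.sqrt_le_sqrt; nlinarith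
  have h5 : Real.sqrt (b ^ 2 + η ^ 2) ≤ 17 := by
    calc Real.sqrt (b ^ 2 + η ^ 2) ≤ Real.sqrt ((|b| + η) ^ 2) := by
          apply Real.sqrt_le_sqrt; nlinarith [abs_nonneg b, _root_.sq_abs b]
      _ = |b| + η := by rw [Real.sqrt_sq hb0]
      _ ≤ 17 := by linarith
  have hs1 : (0:ℝ) ≤ Real.sqrt (a ^ 2 + η ^ 2) := Real.sqrt_nonneg _
  have hs2 : (0:ℝ) ≤ Real.sqrt (b ^ 2 + η ^ 2) := Real.sqrt_nonneg _
  constructor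
  · nlinarith [abs_nonneg a]
  · nlinarith [abs_nonneg a]

lemma aux_final (T s P a K : ℝ) (hT : 0 ≤ T) (hs : 0 ≤ s) (hP : 0 ≤ P)
    (ha1 : 1/16 ≤ a) (ha2 : a ≤ 1) (hTP : T ^ 2 = P * a ^ 2) (hs2 : s ^ 2 = K)
    (h1 : K ≤ P) (h2 : P ≤ 17 * K) : 1/16 * s ≤ T ∧ T ≤ 5 * s := by
  have ha0 : (0:ℝ) ≤ a := le_trans (by norm_num) ha1
  constructor
  · rw [show (1/16 * s) = Real.sqrt ((1/16 * s) ^ 2) from (Real.sqrt_sq (by positivity)).symm,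
      ← Real.sqrt_sq hT]
    apply Real.sqrt_le_sqrt
    nlinarith [mul_le_mul h1 (show (1:ℝ)/256 ≤ a ^ 2 by nlinarith) (by norm_num) hP]
  · rw [show (5 * s) = Real.sqrt ((5 * s) ^ 2) from (Real.sqrt_sq (by positivity)).symm,
      ← Real.sqrt_sq hT]
    apply Real.sqrt_le_sqrt
    nlinarith [mul_le_mul_of_nonneg_left (show a ^ 2 ≤ 1 by nlinarith) hP]

theorem one_sub_msc_sq_bounds (m : ℂ → ℂ)
    (hanalytic : AnalyticOn ℂ m {z : ℂ | 0 < z.im})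
    (hmap : ∀ z : ℂ, 0 < z.im → 0 < (m z).im)
    (heq : ∀ z : ℂ, 0 < z.im → (m z) ^ 2 + z * m z + 1 = 0) :
    ∃ c C : ℝ, 0 < c ∧ 0 < C ∧ ∀ E η : ℝ, |E| ≤ 5 → 0 < η → η ≤ 10 →
      c * Real.sqrt (min |E - 2| |E + 2| + η)
          ≤ ‖1 - (m (E + η * Complex.I)) ^ 2‖ ∧
      ‖1 - (m (E + η * Complex.I)) ^ 2‖
          ≤ C * Real.sqrt (min |E - 2| |E + 2| + η) := by
  refine ⟨1/16, 5, by norm_num, by norm_num, ?_⟩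
  intro E η hE hη hη10
  set z : ℂ := (E : ℂ) + η * Complex.I with hz
  have hzre : z.re = E := by simp [hz]
  have hzim : z.im = η := by simp [hz]
  have him : 0 < z.im := by rw [hzim]; exact hη
  set M := m z with hMdef
  have hM : M ^ 2 + z * M + 1 = 0 := heq z him
  have hMim : 0 < M.im := hmap z him
  have hM0 : M ≠ 0 := by
    intro h; rw [h] at hM; simp at hM
  have hprod : M * (M + z) = -1 := by linear_combination hM
  have habs : ‖M‖ * ‖M + z‖ = 1 := by
    have := congrArg (‖·‖) hprod
    simpa [map_mul] using this
  have hMz0 : M + z ≠ 0 := by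
    intro h; rw [h, mul_zero] at hprod; exact (by norm_num : (0:ℂ) ≠ -1) hprod
  have hMeq : M = -(M + z)⁻¹ := by
    have h1 : (-M) * (M + z) = 1 := by linear_combination -hprod
    rw [inv_eq_of_mul_eq_one_left h1, neg_neg]
  have hns : Complex.normSq M * Complex.normSq (M + z) = 1 := by
    have := congrArg (· ^ 2) habs
    simpa [mul_pow, Complex.sq_norm] using this
  have hnsM : 0 < Complex.normSq M := Complex.normSq_pos.mpr hM0
  have hnsMz : 0 < Complex.normSq (M + z) := Complex.normSq_pos.mpr hMz0
  have him_eq : M.im * Complex.normSq (M + z) = M.im + η := by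
    have h1 : M.im = (M + z).im / Complex.normSq (M + z) := by
      conv_lhs => rw [hMeq]
      rw [Complex.neg_im, Complex.inv_im]
      ring
    have h2 : (M + z).im = M.im + η := by simp [Complex.add_im, hzim]
    field_simp at h1
    rw [h2] at h1
    linarith
  have hnsM1 : Complex.normSq M < 1 := by
    by_contra h
    push_neg at h
    have : Complex.normSq (M + z) ≤ 1 := by nlinarith
    nlinarith
  have habsM1 : ‖M‖ ≤ 1 := by
    rw [Complex.norm_def]
    calc Real.sqrt (Complex.normSq M) ≤ Real.sqrt 1 := Real.sqrt_le_sqrt hnsM1.le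
      _ = 1 := Real.sqrt_one
  have habsMlow : 1/16 ≤ ‖M‖ := by
    have hzabs : ‖z‖ ≤ 15 := by
      calc ‖z‖ ≤ ‖(E:ℂ)‖ + ‖(η:ℂ) * Complex.I‖ := by
            rw [hz]; exact norm_add_le _ _
        _ ≤ 5 + 10 := by
            simp [abs_of_pos hη]
            linarith
        _ = 15 := by norm_num
    have h16 : ‖M + z‖ ≤ 16 := by
      calc ‖M + z‖ ≤ ‖M‖ + ‖z‖ := norm_add_le _ _
        _ ≤ 1 + 15 := by linarith
        _ = 16 := by norm_num
    have hpos : 0 < ‖M + z‖ := norm_pos_iff.mpr hMz0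
    nlinarith [norm_nonneg M]
  have hkey : (1 - M ^ 2) ^ 2 = (z - 2) * (z + 2) * M ^ 2 := by
    linear_combination (1 + M ^ 2 - z * M) * hM
  have hkeyabs : (‖1 - M ^ 2‖) ^ 2 =
      ‖z - 2‖ * ‖z + 2‖ * (‖M‖) ^ 2 := by
    have := congrArg (‖·‖) hkey
    simpa [map_mul, map_pow] using this
  have hA : ‖z - 2‖ = Real.sqrt ((E - 2) ^ 2 + η ^ 2) := by
    rw [Complex.norm_def, Complex.normSq_apply]
    congr 1
    simp [hzre, hzim, Complex.sub_re, Complex.sub_im]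
    ring
  have hB : ‖z + 2‖ = Real.sqrt ((E + 2) ^ 2 + η ^ 2) := by
    rw [Complex.norm_def, Complex.normSq_apply]
    congr 1
    simp [hzre, hzim, Complex.add_re, Complex.add_im]
    ring
  have hEle := abs_le.mp hE
  have hE2 : |E - 2| ≤ 7 := by rw [abs_le]; constructor <;> linarith [hEle.1, hEle.2]
  have hE2' : |E + 2| ≤ 7 := by rw [abs_le]; constructor <;> linarith [hEle.1, hEle.2]
  have hsum : 4 ≤ |E - 2| + |E + 2| := by
    rcases abs_cases (E - 2) with ⟨h1, h1'⟩ | ⟨h1, h1'⟩ <;>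
      rcases abs_cases (E + 2) with ⟨h2, h2'⟩ | ⟨h2, h2'⟩ <;> linarith
  have hPB : min |E - 2| |E + 2| + η ≤ ‖z - 2‖ * ‖z + 2‖ ∧
      ‖z - 2‖ * ‖z + 2‖ ≤ 17 * (min |E - 2| |E + 2| + η) := by
    rcases le_total |E - 2| |E + 2| with hc | hc
    · have hmin : min |E - 2| |E + 2| = |E - 2| := min_eq_left hc
      have hb2 : 2 ≤ |E + 2| := by linarith
      have := aux_prod_bounds (E - 2) (E + 2) η hη hη10 hE2' hb2
      rw [hmin, hA, hB]
      exact this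
    · have hmin : min |E - 2| |E + 2| = |E + 2| := min_eq_right hc
      have hb2 : 2 ≤ |E - 2| := by linarith
      have := aux_prod_bounds (E + 2) (E - 2) η hη hη10 hE2 hb2
      rw [hmin, hA, hB, mul_comm]
      exact this
  have hκη : 0 ≤ min |E - 2| |E + 2| + η := by positivity
  exact aux_final (‖1 - M ^ 2‖) (Real.sqrt (min |E - 2| |E + 2| + η))
    (‖z - 2‖ * ‖z + 2‖) (‖M‖)
    (min |E - 2| |E + 2| + η) (norm_nonneg _) (Real.sqrt_nonneg _)
    (mul_nonneg (norm_nonneg _) (norm_nonneg _)) habsMlow habsM1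
    hkeyabs (Real.sq_sqrt hκη) hPB.1 hPB.2
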